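/- arXiv:1609.06353 — 3 statements merged into one kernel-verified Lean document; each statement's English description precedes it below -/
import Mathlib

section
/- Let K ≥ 3, and suppose nonnegative reals R1 and R_{k,1}, R_{k,2} (for 2 ≤ k ≤ K) lie in the component-rate region. Define R2 = R_{2,1}; R_k = R_{k−1,2} + R_{k,1} for 3 ≤ k ≤ K−1; and R_K = R_{K−1,2} + R_{K,1} + R_{K,2}. Then (R1, …, R_K) lies in the closed-form region. (No hypotheses on the parameters a_j, b_{j,l} are needed.) -/
open scoped BigOperators

/-- If nonnegative component rates `R1, R_{k,1}, R_{k,2}` lie in the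
component-rate region (with parameters `a j` and `b j l`, all indices `1`-based),
then the rates obtained by the rate-sharing definitions lie in the closed-form region.
No hypotheses on `a`, `b` are needed. -/
theorem rate_sharing_projection
    (K : ℕ) (hK : 3 ≤ K) (a : ℕ → ℝ) (b : ℕ → ℕ → ℝ)
    (R1 : ℝ) (r1 r2 : ℕ → ℝ)
    (hR1 : 0 ≤ R1)
    (hr : ∀ k, 2 ≤ k → k ≤ K → 0 ≤ r1 k ∧ 0 ≤ r2 k)
    -- the component-rate region
    (c1 : R1 ≤ a 1)
    (c2 : ∀ k, 2 ≤ k → k ≤ K → r1 k + r2 k ≤ a k)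
    (c3 : ∀ l j, 3 ≤ l → l ≤ K → l - 1 ≤ j → j ≤ K →
      r2 (l - 1) + ∑ i ∈ Finset.Icc l j, (r1 i + r2 i)
        ≤ (∑ i ∈ Finset.Icc (l - 1) j, a i) - b j l)
    -- the rate-sharing definitions
    (Rt : ℕ → ℝ)
    (hs1 : Rt 1 = R1)
    (hs2 : Rt 2 = r1 2)
    (hs3 : ∀ k, 3 ≤ k → k ≤ K - 1 → Rt k = r2 (k - 1) + r1 k)
    (hs4 : Rt K = r2 (K - 1) + r1 K + r2 K) :
    -- (R1,…,RK) lies in the closed-form region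
    (∀ k, 1 ≤ k → k ≤ K → 0 ≤ Rt k) ∧
    Rt 1 ≤ a 1 ∧
    (∀ k, 2 ≤ k → k ≤ K →
      ∑ j ∈ Finset.Icc 2 k, Rt j ≤ ∑ j ∈ Finset.Icc 2 k, a j) ∧
    (∀ l k, 3 ≤ l → l ≤ k → k ≤ K →
      ∑ j ∈ Finset.Icc l k, Rt j ≤ (∑ j ∈ Finset.Icc (l - 1) k, a j) - b k l) := by
  have hRt : ∀ k, 1 ≤ k → k ≤ K → 0 ≤ Rt k := by
    intro k hk1 hkK
    rcases Nat.lt_or_ge k 2 with h | h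
    · have hk : k = 1 := by omega
      subst hk; rw [hs1]; exact hR1
    rcases Nat.lt_or_ge k 3 with h3 | h3
    · have hk : k = 2 := by omega
      subst hk; rw [hs2]; exact (hr 2 le_rfl (by omega)).1
    rcases Nat.lt_or_ge k K with hkK' | hkK'
    · rw [hs3 k h3 (by omega)]
      have h1 := hr (k - 1) (by omega) (by omega)
      have h2 := hr k (by omega) hkK
      linarith [h1.2, h2.1]
    · have hk : k = K := by omega
      rw [hk, hs4]
      have h1 := hr (K - 1) (by omega) (by omega)
      have h2 := hr K (by omega) le_rfl
      linarith [h1.2, h2.1, h2.2]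
  have key : ∀ k, 2 ≤ k → k ≤ K →
      ∑ j ∈ Finset.Icc 2 k, Rt j
        = (∑ j ∈ Finset.Icc 2 k, (r1 j + r2 j)) - (if k < K then r2 k else 0) := by
    intro k hk2
    induction k, hk2 using Nat.le_induction with
    | base =>
      intro _
      rw [if_pos (by omega : 2 < K)]
      simp [hs2]
    | succ k hk ih =>
      intro hk1K
      have ih' := ih (by omega)
      rw [Finset.sum_Icc_succ_top (by omega : 2 ≤ k + 1),
          Finset.sum_Icc_succ_top (by omega : 2 ≤ k + 1), ih']
      rw [if_pos (by omega : k < K)]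
      rcases Nat.lt_or_ge (k + 1) K with h | h
      · rw [if_pos h, hs3 (k + 1) (by omega) (by omega)]
        simp only [Nat.add_sub_cancel]
        ring
      · have hk' : k + 1 = K := by omega
        rw [if_neg (by omega), hk', hs4]
        have : K - 1 = k := by omega
        rw [this]
        ring
  have key2 : ∀ l, 3 ≤ l → ∀ k, l ≤ k → k ≤ K →
      ∑ j ∈ Finset.Icc l k, Rt j
        = r2 (l - 1) + (∑ i ∈ Finset.Icc l k, (r1 i + r2 i))
            - (if k < K then r2 k else 0) := by
    intro l hl3 k hlk
    induction k, hlk using Nat.le_induction with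
    | base =>
      intro hlK
      rcases Nat.lt_or_ge l K with h | h
      · rw [if_pos h]
        simp only [Finset.Icc_self, Finset.sum_singleton]
        rw [hs3 l hl3 (by omega)]
        ring
      · have hl : l = K := by omega
        rw [if_neg (by omega)]
        simp only [Finset.Icc_self, Finset.sum_singleton]
        rw [hl, hs4]
        ring
    | succ k hk ih =>
      intro hk1K
      have ih' := ih (by omega)
      rw [Finset.sum_Icc_succ_top (by omega : l ≤ k + 1),
          Finset.sum_Icc_succ_top (by omega : l ≤ k + 1), ih']
      rw [if_pos (by omega : k < K)]
      rcases Nat.lt_or_ge (k + 1) K with h | h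
      · rw [if_pos h, hs3 (k + 1) (by omega) (by omega)]
        simp only [Nat.add_sub_cancel]
        ring
      · have hk' : k + 1 = K := by omega
        rw [if_neg (by omega), hk', hs4]
        have : K - 1 = k := by omega
        rw [this]
        ring
  refine ⟨hRt, by rw [hs1]; exact c1, ?_, ?_⟩
  · intro k hk2 hkK
    rw [key k hk2 hkK]
    have h1 : ∑ j ∈ Finset.Icc 2 k, (r1 j + r2 j) ≤ ∑ j ∈ Finset.Icc 2 k, a j := by
      apply Finset.sum_le_sum
      intro i hi
      rw [Finset.mem_Icc] at hi
      exact c2 i hi.1 (le_trans hi.2 hkK)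
    have h2 : (0 : ℝ) ≤ (if k < K then r2 k else 0) := by
      split
      · exact (hr k hk2 hkK).2
      · exact le_rfl
    linarith
  · intro l k hl3 hlk hkK
    rw [key2 l hl3 k hlk hkK]
    have h1 := c3 l k hl3 (le_trans hlk hkK) (by omega) hkK
    have h2 : (0 : ℝ) ≤ (if k < K then r2 k else 0) := by
      split
      · exact (hr k (by omega) hkK).2
      · exact le_rfl
    linarith
end

section
/- Let K ≥ 3 and let U1, …, U_{K−1}, X, Y1, …, Y_K be finitely-valued random variables forming the Markov chain U1 → U2 → ⋯ → U_{K−1} → X → Y_K → Y_{K−1} → ⋯ → Y1; set U_K := X and instantiate the parameters as a_1 = I(U1; Y1), a_j = I(U_j; Y_j | U_{j−1}) for 2 ≤ j ≤ K, and b_{j,l} = I(U_j; Y_{l−2} | U_{l−2}) for 3 ≤ l ≤ K, l−1 ≤ j ≤ K. If nonnegative reals (R1, …, R_K) lie in the closed-form region, then there exist nonnegative reals R_{k,1}, R_{k,2} (2 ≤ k ≤ K) lying in the component-rate region and satisfying the rate-sharing equalities R2 = R_{2,1}; R_k = R_{k−1,2} + R_{k,1} for 3 ≤ k ≤ K−1;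 R_K = R_{K−1,2} + R_{K,1} + R_{K,2}. -/
open scoped BigOperators Classical

noncomputable section

namespace BRSec

variable {Ω : Type*} [Fintype Ω]

def prb (p : Ω → ℝ) {α : Type*} (X : Ω → α) (a : α) : ℝ :=
  ∑ ω, if X ω = a then p ω else 0

def IsPMF (p : Ω → ℝ) : Prop :=
  (∀ ω, 0 ≤ p ω) ∧ ∑ ω, p ω = 1

def H (p : Ω → ℝ) {α : Type*} [Fintype α] (X : Ω → α) : ℝ :=
  ∑ a, Real.negMulLog (prb p X a)

def MI (p : Ω → ℝ) {α β : Type*} [Fintype α] [Fintype β] (X : Ω → α) (Y : Ω → β) : ℝ :=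
  H p X + H p Y - H p fun ω => (X ω, Y ω)

def CMI (p : Ω → ℝ) {α β γ : Type*} [Fintype α] [Fintype β] [Fintype γ]
    (X : Ω → α) (Y : Ω → β) (Z : Ω → γ) : ℝ :=
  (H p fun ω => (X ω, Z ω)) + (H p fun ω => (Y ω, Z ω))
    - (H p fun ω => (X ω, Y ω, Z ω)) - H p Z

def MarkovTriple (p : Ω → ℝ) {α β γ : Type*} (X : Ω → α) (Y : Ω → β) (Z : Ω → γ) : Prop :=
  ∀ a b c,
    prb p (fun ω => (X ω, Y ω, Z ω)) (a, b, c) * prb p Y b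
      = prb p (fun ω => (X ω, Y ω)) (a, b) * prb p (fun ω => (Y ω, Z ω)) (b, c)


set_option maxHeartbeats 1000000

section Lemmas

variable {p : Ω → ℝ} {α β γ δ : Type*}

lemma prb_nonneg (hp : ∀ ω, 0 ≤ p ω) (X : Ω → α) (a : α) : 0 ≤ prb p X a := by
  apply Finset.sum_nonneg
  intro ω _
  split <;> [exact hp ω; rfl]

lemma prb_congr {X : Ω → α} {Y : Ω → β} {a : α} {b : β}
    (h : ∀ ω, X ω = a ↔ Y ω = b) : prb p X a = prb p Y b := by
  unfold prb
  refine Finset.sum_congr rfl fun ω _ => ?_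
  by_cases hc : X ω = a
  · rw [if_pos hc, if_pos ((h ω).1 hc)]
  · rw [if_neg hc, if_neg (fun hc2 => hc ((h ω).2 hc2))]

lemma prb_mono (hp : ∀ ω, 0 ≤ p ω) {X : Ω → α} {Y : Ω → β} {a : α} {b : β}
    (h : ∀ ω, X ω = a → Y ω = b) : prb p X a ≤ prb p Y b := by
  unfold prb
  refine Finset.sum_le_sum fun ω _ => ?_
  by_cases hc : X ω = a
  · rw [if_pos hc, if_pos (h ω hc)]
  · rw [if_neg hc]; split <;> [exact hp ω; rfl]

/-- marginalizing out the second component of a pair -/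
lemma sum_prb_pair [Fintype β] (X : Ω → α) (Y : Ω → β) (a : α) :
    ∑ b, prb p (fun ω => (X ω, Y ω)) (a, b) = prb p X a := by
  unfold prb
  rw [Finset.sum_comm]
  refine Finset.sum_congr rfl fun ω _ => ?_
  by_cases hc : X ω = a
  · rw [Finset.sum_eq_single (Y ω)]
    · simp [hc]
    · intro b _ hb; rw [if_neg (by simp [hb, Prod.ext_iff]; tauto)]
    · intro h; exact absurd (Finset.mem_univ _) h
  · rw [if_neg hc]
    refine Finset.sum_eq_zero fun b _ => ?_
    rw [if_neg (by simp [Prod.ext_iff]; tauto)]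

lemma sum_prb [Fintype α] (hp : IsPMF p) (X : Ω → α) : ∑ a, prb p X a = 1 := by
  unfold prb
  rw [Finset.sum_comm, ← hp.2]
  refine Finset.sum_congr rfl fun ω _ => ?_
  rw [Finset.sum_eq_single (X ω)]
  · simp
  · intro b _ hb; rw [if_neg (fun h => hb h.symm)]
  · intro h; exact absurd (Finset.mem_univ _) h

/-- relabeling invariance of entropy -/
lemma H_map [Fintype α] [Fintype β] (f : α → β) (hf : Function.Injective f) (X : Ω → α) :
    H p (fun ω => f (X ω)) = H p X := by
  unfold H
  have himg : ∑ b ∈ Finset.univ.image f, Real.negMulLog (prb p (fun ω => f (X ω)) b)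
      = ∑ a : α, Real.negMulLog (prb p (fun ω => f (X ω)) (f a)) :=
    Finset.sum_image (by intro x _ y _ h; exact hf h)
  rw [← Finset.sum_subset (Finset.subset_univ (Finset.univ.image f)), himg]
  · refine Finset.sum_congr rfl fun a _ => ?_
    congr 1
    exact prb_congr fun ω => ⟨fun h => hf h, fun h => by rw [h]⟩
  · intro b _ hb
    have : prb p (fun ω => f (X ω)) b = 0 := by
      refine Finset.sum_eq_zero fun ω _ => ?_
      rw [if_neg]
      intro h
      exact hb (Finset.mem_image.2 ⟨X ω, Finset.mem_univ _, h⟩)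
    rw [this, Real.negMulLog_zero]

end Lemmas



section CMILemmas
set_option maxHeartbeats 1000000

variable {p : Ω → ℝ} {α β γ δ : Type*} [Fintype α] [Fintype β] [Fintype γ] [Fintype δ]

lemma negMulLog_sum {ι : Type*} [Fintype ι] (f : ι → ℝ) :
    Real.negMulLog (∑ i, f i) = ∑ i, -(f i * Real.log (∑ j, f j)) := by
  rw [Real.negMulLog, neg_mul, Finset.sum_mul]
  simp

lemma CMI_expand (X : Ω → α) (Y : Ω → β) (Z : Ω → γ) :
    CMI p X Y Z = ∑ x, ∑ y, ∑ z,
      prb p (fun ω => (X ω, Y ω, Z ω)) (x, y, z) *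
        (Real.log (prb p (fun ω => (X ω, Y ω, Z ω)) (x, y, z)) + Real.log (prb p Z z)
          - Real.log (prb p (fun ω => (X ω, Z ω)) (x, z))
          - Real.log (prb p (fun ω => (Y ω, Z ω)) (y, z))) := by
  have hmA : ∀ x z, ∑ y, prb p (fun ω => (X ω, Y ω, Z ω)) (x, y, z)
      = prb p (fun ω => (X ω, Z ω)) (x, z) := by
    intro x z
    rw [← sum_prb_pair (p := p) (fun ω => (X ω, Z ω)) Y (x, z)]
    exact Finset.sum_congr rfl fun y _ => prb_congr (fun ω => by
      constructor <;> (intro h; simp_all [Prod.ext_iff]))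
  have hmB : ∀ y z, ∑ x, prb p (fun ω => (X ω, Y ω, Z ω)) (x, y, z)
      = prb p (fun ω => (Y ω, Z ω)) (y, z) := by
    intro y z
    rw [← sum_prb_pair (p := p) (fun ω => (Y ω, Z ω)) X (y, z)]
    exact Finset.sum_congr rfl fun x _ => prb_congr (fun ω => by
      constructor <;> (intro h; simp_all [Prod.ext_iff]))
  have hmC : ∀ z, ∑ x, ∑ y, prb p (fun ω => (X ω, Y ω, Z ω)) (x, y, z) = prb p Z z := by
    intro z
    rw [← sum_prb_pair (p := p) Z (fun ω => (X ω, Y ω)) z, Fintype.sum_prod_type]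
    exact Finset.sum_congr rfl fun x _ => Finset.sum_congr rfl fun y _ =>
      prb_congr (fun ω => by constructor <;> (intro h; simp_all [Prod.ext_iff]))
  have hXZ : (H p fun ω => (X ω, Z ω)) = ∑ x, ∑ y, ∑ z,
      -(prb p (fun ω => (X ω, Y ω, Z ω)) (x, y, z)
        * Real.log (prb p (fun ω => (X ω, Z ω)) (x, z))) := by
    unfold H
    rw [Fintype.sum_prod_type]
    calc (∑ x, ∑ z, Real.negMulLog (prb p (fun ω => (X ω, Z ω)) (x, z)))
        = ∑ x, ∑ z, ∑ y, -(prb p (fun ω => (X ω, Y ω, Z ω)) (x, y, z)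
            * Real.log (prb p (fun ω => (X ω, Z ω)) (x, z))) := by
          refine Finset.sum_congr rfl fun x _ => Finset.sum_congr rfl fun z _ => ?_
          rw [← hmA x z, negMulLog_sum]
      _ = _ := Finset.sum_congr rfl fun x _ => Finset.sum_comm
  have hYZ : (H p fun ω => (Y ω, Z ω)) = ∑ x, ∑ y, ∑ z,
      -(prb p (fun ω => (X ω, Y ω, Z ω)) (x, y, z)
        * Real.log (prb p (fun ω => (Y ω, Z ω)) (y, z))) := by
    unfold H
    rw [Fintype.sum_prod_type]
    calc (∑ y, ∑ z, Real.negMulLog (prb p (fun ω => (Y ω, Z ω)) (y, z)))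
        = ∑ y, ∑ z, ∑ x, -(prb p (fun ω => (X ω, Y ω, Z ω)) (x, y, z)
            * Real.log (prb p (fun ω => (Y ω, Z ω)) (y, z))) := by
          refine Finset.sum_congr rfl fun y _ => Finset.sum_congr rfl fun z _ => ?_
          rw [← hmB y z, negMulLog_sum]
      _ = ∑ y, ∑ x, ∑ z, -(prb p (fun ω => (X ω, Y ω, Z ω)) (x, y, z)
            * Real.log (prb p (fun ω => (Y ω, Z ω)) (y, z))) :=
          Finset.sum_congr rfl fun y _ => Finset.sum_comm
      _ = _ := Finset.sum_comm
  have hZ : H p Z = ∑ x, ∑ y, ∑ z,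
      -(prb p (fun ω => (X ω, Y ω, Z ω)) (x, y, z) * Real.log (prb p Z z)) := by
    unfold H
    calc (∑ z, Real.negMulLog (prb p Z z))
        = ∑ z, ∑ x, ∑ y, -(prb p (fun ω => (X ω, Y ω, Z ω)) (x, y, z)
            * Real.log (prb p Z z)) := by
          refine Finset.sum_congr rfl fun z _ => ?_
          rw [← hmC z]
          rw [show (∑ x, ∑ y, prb p (fun ω => (X ω, Y ω, Z ω)) (x, y, z))
            = ∑ q : α × β, prb p (fun ω => (X ω, Y ω, Z ω)) (q.1, q.2, z)
            from (Fintype.sum_prod_type (fun q : α × β => prb p (fun ω => (X ω, Y ω, Z ω)) (q.1, q.2, z))).symm]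
          rw [negMulLog_sum, Fintype.sum_prod_type]
      _ = ∑ x, ∑ z, ∑ y, -(prb p (fun ω => (X ω, Y ω, Z ω)) (x, y, z)
            * Real.log (prb p Z z)) := Finset.sum_comm
      _ = _ := Finset.sum_congr rfl fun x _ => Finset.sum_comm
  have hXYZ : (H p fun ω => (X ω, Y ω, Z ω)) = ∑ x, ∑ y, ∑ z,
      -(prb p (fun ω => (X ω, Y ω, Z ω)) (x, y, z)
        * Real.log (prb p (fun ω => (X ω, Y ω, Z ω)) (x, y, z))) := by
    unfold H
    rw [Fintype.sum_prod_type]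
    refine Finset.sum_congr rfl fun x _ => ?_
    rw [Fintype.sum_prod_type]
    refine Finset.sum_congr rfl fun y _ => Finset.sum_congr rfl fun z _ => ?_
    rw [Real.negMulLog]
    ring
  unfold CMI
  rw [hXZ, hYZ, hZ, hXYZ]
  rw [← Finset.sum_add_distrib, ← Finset.sum_sub_distrib, ← Finset.sum_sub_distrib]
  refine Finset.sum_congr rfl fun x _ => ?_
  rw [← Finset.sum_add_distrib, ← Finset.sum_sub_distrib, ← Finset.sum_sub_distrib]
  refine Finset.sum_congr rfl fun y _ => ?_
  rw [← Finset.sum_add_distrib, ← Finset.sum_sub_distrib, ← Finset.sum_sub_distrib]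
  refine Finset.sum_congr rfl fun z _ => ?_
  ring

lemma CMI_nonneg (hp : IsPMF p) (X : Ω → α) (Y : Ω → β) (Z : Ω → γ) :
    0 ≤ CMI p X Y Z := by
  have hn := hp.1
  rw [CMI_expand]
  have key : ∀ x y z,
      prb p (fun ω => (X ω, Y ω, Z ω)) (x, y, z)
        - prb p (fun ω => (X ω, Z ω)) (x, z) * prb p (fun ω => (Y ω, Z ω)) (y, z)
          / prb p Z z
      ≤ prb p (fun ω => (X ω, Y ω, Z ω)) (x, y, z) *
        (Real.log (prb p (fun ω => (X ω, Y ω, Z ω)) (x, y, z)) + Real.log (prb p Z z)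
          - Real.log (prb p (fun ω => (X ω, Z ω)) (x, z))
          - Real.log (prb p (fun ω => (Y ω, Z ω)) (y, z))) := by
    intro x y z
    set P := prb p (fun ω => (X ω, Y ω, Z ω)) (x, y, z) with hPd
    set A := prb p (fun ω => (X ω, Z ω)) (x, z) with hAd
    set B := prb p (fun ω => (Y ω, Z ω)) (y, z) with hBd
    set C := prb p Z z with hCd
    have hA0 : 0 ≤ A := prb_nonneg hn _ _
    have hB0 : 0 ≤ B := prb_nonneg hn _ _
    have hC0 : 0 ≤ C := prb_nonneg hn _ _
    have hPA : P ≤ A := prb_mono hn (fun ω h => by simp_all [Prod.ext_iff])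
    have hPB : P ≤ B := prb_mono hn (fun ω h => by simp_all [Prod.ext_iff])
    have hPC : P ≤ C := prb_mono hn (fun ω h => by simp_all [Prod.ext_iff])
    rcases eq_or_lt_of_le (prb_nonneg hn (fun ω => (X ω, Y ω, Z ω)) (x, y, z)) with hP0 | hP0
    · rw [← hPd] at hP0
      rw [← hP0]
      simp only [zero_mul, zero_sub, neg_nonpos]
      positivity
    · rw [← hPd] at hP0
      have hApos : 0 < A := lt_of_lt_of_le hP0 hPA
      have hBpos : 0 < B := lt_of_lt_of_le hP0 hPB
      have hCpos : 0 < C := lt_of_lt_of_le hP0 hPC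
      have hqpos : 0 < A * B / C := by positivity
      have hlog := Real.log_le_sub_one_of_pos (show 0 < (A * B / C) / P by positivity)
      rw [Real.log_div (ne_of_gt hqpos) (ne_of_gt hP0), Real.log_div (by positivity)
        (ne_of_gt hCpos), Real.log_mul (ne_of_gt hApos) (ne_of_gt hBpos)] at hlog
      have := mul_le_mul_of_nonneg_left hlog (le_of_lt hP0)
      rw [mul_sub] at this
      have hPq : P * ((A * B / C) / P) = A * B / C := by field_simp
      nlinarith [this]
  have step1 : (0:ℝ) ≤ ∑ x, ∑ y, ∑ z,
      (prb p (fun ω => (X ω, Y ω, Z ω)) (x, y, z)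
        - prb p (fun ω => (X ω, Z ω)) (x, z) * prb p (fun ω => (Y ω, Z ω)) (y, z)
          / prb p Z z) := by
      have hsplit : ∀ z : γ, (∑ x, ∑ y,
          (prb p (fun ω => (X ω, Y ω, Z ω)) (x, y, z)
            - prb p (fun ω => (X ω, Z ω)) (x, z) * prb p (fun ω => (Y ω, Z ω)) (y, z)
              / prb p Z z)) = prb p Z z -
            (∑ x, prb p (fun ω => (X ω, Z ω)) (x, z)) *
              (∑ y, prb p (fun ω => (Y ω, Z ω)) (y, z)) / prb p Z z := by
        intro z
        rw [show (∑ x, ∑ y,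
          (prb p (fun ω => (X ω, Y ω, Z ω)) (x, y, z)
            - prb p (fun ω => (X ω, Z ω)) (x, z) * prb p (fun ω => (Y ω, Z ω)) (y, z)
              / prb p Z z)) = (∑ x, ∑ y, prb p (fun ω => (X ω, Y ω, Z ω)) (x, y, z))
            - ∑ x, ∑ y, prb p (fun ω => (X ω, Z ω)) (x, z)
              * prb p (fun ω => (Y ω, Z ω)) (y, z) / prb p Z z from by
          rw [← Finset.sum_sub_distrib]
          exact Finset.sum_congr rfl fun x _ => by rw [← Finset.sum_sub_distrib]]
        congr 1
        · -- marginal of triple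
          rw [← sum_prb_pair (p := p) Z (fun ω => (X ω, Y ω)) z, Fintype.sum_prod_type]
          exact Finset.sum_congr rfl fun x _ => Finset.sum_congr rfl fun y _ =>
            prb_congr (fun ω => by constructor <;> (intro h; simp_all [Prod.ext_iff]))
        · rw [Finset.sum_mul, Finset.sum_div]
          refine Finset.sum_congr rfl fun x _ => ?_
          rw [Finset.mul_sum, Finset.sum_div]
      have hord : (∑ x, ∑ y, ∑ z,
          (prb p (fun ω => (X ω, Y ω, Z ω)) (x, y, z)
            - prb p (fun ω => (X ω, Z ω)) (x, z) * prb p (fun ω => (Y ω, Z ω)) (y, z)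
              / prb p Z z)) = ∑ z, ∑ x, ∑ y,
          (prb p (fun ω => (X ω, Y ω, Z ω)) (x, y, z)
            - prb p (fun ω => (X ω, Z ω)) (x, z) * prb p (fun ω => (Y ω, Z ω)) (y, z)
              / prb p Z z) := by
        have hmid : (∑ x, ∑ y, ∑ z, (prb p (fun ω => (X ω, Y ω, Z ω)) (x, y, z)
            - prb p (fun ω => (X ω, Z ω)) (x, z) * prb p (fun ω => (Y ω, Z ω)) (y, z)
              / prb p Z z)) = ∑ x, ∑ z, ∑ y, (prb p (fun ω => (X ω, Y ω, Z ω)) (x, y, z)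
            - prb p (fun ω => (X ω, Z ω)) (x, z) * prb p (fun ω => (Y ω, Z ω)) (y, z)
              / prb p Z z) :=
          Finset.sum_congr rfl fun x _ => Finset.sum_comm
        rw [hmid]
        exact Finset.sum_comm
      rw [hord]
      refine Finset.sum_nonneg fun z _ => ?_
      rw [hsplit z]
      have hmX : ∑ x, prb p (fun ω => (X ω, Z ω)) (x, z) = prb p Z z := by
        rw [← sum_prb_pair (p := p) Z X z]
        exact Finset.sum_congr rfl fun x _ =>
          prb_congr (fun ω => by constructor <;> (intro h; simp_all [Prod.ext_iff]))
      have hmY : ∑ y, prb p (fun ω => (Y ω, Z ω)) (y, z) = prb p Z z := by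
        rw [← sum_prb_pair (p := p) Z Y z]
        exact Finset.sum_congr rfl fun y _ =>
          prb_congr (fun ω => by constructor <;> (intro h; simp_all [Prod.ext_iff]))
      rw [hmX, hmY]
      rcases eq_or_lt_of_le (prb_nonneg hn Z z) with h0 | h0
      · rw [← h0]; simp
      · rw [mul_div_assoc, div_self (ne_of_gt h0), mul_one, sub_self]
  exact le_trans step1 (Finset.sum_le_sum fun x _ => Finset.sum_le_sum fun y _ =>
    Finset.sum_le_sum fun z _ => key x y z)

lemma CMI_markov_zero (hp : IsPMF p) {A : Ω → α} {B : Ω → β} {C : Ω → γ}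
    (h : MarkovTriple p A B C) : CMI p A C B = 0 := by
  have hn := hp.1
  rw [CMI_expand]
  refine Finset.sum_eq_zero fun a _ => Finset.sum_eq_zero fun c _ =>
    Finset.sum_eq_zero fun b _ => ?_
  set P := prb p (fun ω => (A ω, C ω, B ω)) (a, c, b) with hPd
  rcases eq_or_lt_of_le (prb_nonneg hn (fun ω => (A ω, C ω, B ω)) (a, c, b)) with hP0 | hP0
  · rw [← hPd] at hP0; rw [← hP0, zero_mul]
  · rw [← hPd] at hP0
    have hPe : prb p (fun ω => (A ω, B ω, C ω)) (a, b, c) = P :=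
      prb_congr (fun ω => by constructor <;> (intro h2; simp_all [Prod.ext_iff] <;> tauto))
    have hmk := h a b c
    rw [hPe] at hmk
    set Q := prb p (fun ω => (A ω, B ω)) (a, b) with hQd
    set R := prb p (fun ω => (B ω, C ω)) (b, c) with hRd
    set S := prb p B b with hSd
    have hAB : prb p (fun ω => (A ω, B ω)) (a, b) = Q := rfl
    have hPQ : P ≤ Q := by
      rw [hQd, ← hPe]
      exact prb_mono hn (fun ω h2 => by simp_all [Prod.ext_iff])
    have hPR : P ≤ R := by
      rw [hRd, ← hPe]
      exact prb_mono hn (fun ω h2 => by simp_all [Prod.ext_iff])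
    have hPS : P ≤ S := by
      rw [hSd, ← hPe]
      exact prb_mono hn (fun ω h2 => by simp_all [Prod.ext_iff])
    have hQpos : 0 < Q := lt_of_lt_of_le hP0 hPQ
    have hRpos : 0 < R := lt_of_lt_of_le hP0 hPR
    have hSpos : 0 < S := lt_of_lt_of_le hP0 hPS
    have hCB : prb p (fun ω => (C ω, B ω)) (c, b) = R :=
      prb_congr (fun ω => by constructor <;> (intro h2; simp_all [Prod.ext_iff] <;> tauto))
    rw [hCB]
    have hlogs : Real.log P + Real.log S = Real.log Q + Real.log R := by
      rw [← Real.log_mul (ne_of_gt hP0) (ne_of_gt hSpos),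
        ← Real.log_mul (ne_of_gt hQpos) (ne_of_gt hRpos), hmk]
    rw [show Real.log P + Real.log S - Real.log Q - Real.log R = 0 by linarith, mul_zero]

lemma H_unit (hp : IsPMF p) : H p (fun _ : Ω => ()) = 0 := by
  unfold H
  rw [Fintype.sum_unique]
  have : prb p (fun _ : Ω => ()) () = 1 := by
    unfold prb; simpa using hp.2
  rw [this, Real.negMulLog_one]

lemma MI_eq_CMI (hp : IsPMF p) (X : Ω → α) (Y : Ω → β) :
    MI p X Y = CMI p X Y (fun _ => ()) := by
  unfold MI CMI
  rw [H_unit hp]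
  rw [show (H p fun ω => (X ω, ())) = H p X from
    H_map (fun x : α => (x, ())) (fun x y h => by simpa using h) X]
  rw [show (H p fun ω => (Y ω, ())) = H p Y from
    H_map (fun y : β => (y, ())) (fun x y h => by simpa using h) Y]
  rw [show (H p fun ω => (X ω, Y ω, ())) = H p (fun ω => (X ω, Y ω)) from
    H_map (fun q : α × β => (q.1, q.2, ())) (fun x y h => by
      simp [Prod.ext_iff] at h; exact Prod.ext h.1 h.2) (fun ω => (X ω, Y ω))]
  ring

lemma MI_nonneg (hp : IsPMF p) (X : Ω → α) (Y : Ω → β) : 0 ≤ MI p X Y := by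
  rw [MI_eq_CMI hp]
  exact CMI_nonneg hp _ _ _

/-- CMI is invariant under injective relabeling of the first argument. -/
lemma CMI_relabel_fst (f : α → δ) (hf : Function.Injective f) [Fintype δ]
    (X : Ω → α) (Y : Ω → β) (Z : Ω → γ) :
    CMI p (fun ω => f (X ω)) Y Z = CMI p X Y Z := by
  unfold CMI
  rw [show (H p fun ω => (f (X ω), Z ω)) = H p fun ω => (X ω, Z ω) from
    H_map (fun q : α × γ => (f q.1, q.2)) (fun x y h => by
      simp [Prod.ext_iff] at h; exact Prod.ext (hf h.1) h.2) (fun ω => (X ω, Z ω))]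
  rw [show (H p fun ω => (f (X ω), Y ω, Z ω)) = H p fun ω => (X ω, Y ω, Z ω) from
    H_map (fun q : α × β × γ => (f q.1, q.2)) (fun x y h => by
      simp [Prod.ext_iff] at h; exact Prod.ext (hf h.1) (Prod.ext h.2.1 h.2.2)) (fun ω => (X ω, Y ω, Z ω))]

/-- CMI is invariant under injective relabeling of the third argument. -/
lemma CMI_relabel_thd (g : γ → δ) (hg : Function.Injective g) [Fintype δ]
    (X : Ω → α) (Y : Ω → β) (Z : Ω → γ) :
    CMI p X Y (fun ω => g (Z ω)) = CMI p X Y Z := by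
  unfold CMI
  rw [show (H p fun ω => (X ω, g (Z ω))) = H p fun ω => (X ω, Z ω) from
    H_map (fun q : α × γ => (q.1, g q.2)) (fun x y h => by
      simp [Prod.ext_iff] at h; exact Prod.ext h.1 (hg h.2)) (fun ω => (X ω, Z ω))]
  rw [show (H p fun ω => (Y ω, g (Z ω))) = H p fun ω => (Y ω, Z ω) from
    H_map (fun q : β × γ => (q.1, g q.2)) (fun x y h => by
      simp [Prod.ext_iff] at h; exact Prod.ext h.1 (hg h.2)) (fun ω => (Y ω, Z ω))]
  rw [show (H p fun ω => (X ω, Y ω, g (Z ω))) = H p fun ω => (X ω, Y ω, Z ω) from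
    H_map (fun q : α × β × γ => (q.1, q.2.1, g q.2.2)) (fun x y h => by
      simp [Prod.ext_iff] at h; exact Prod.ext h.1 (Prod.ext h.2.1 (hg h.2.2))) (fun ω => (X ω, Y ω, Z ω))]
  rw [show (H p fun ω => g (Z ω)) = H p Z from H_map g hg Z]

/-- CMI is symmetric in its first two arguments. -/
lemma CMI_comm (X : Ω → α) (Y : Ω → β) (Z : Ω → γ) :
    CMI p X Y Z = CMI p Y X Z := by
  unfold CMI
  rw [show (H p fun ω => (X ω, Y ω, Z ω)) = H p fun ω => (Y ω, X ω, Z ω) from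
    H_map (fun q : β × α × γ => (q.2.1, q.1, q.2.2)) (fun x y h => by
      simp [Prod.ext_iff] at h; exact Prod.ext h.2.1 (Prod.ext h.1 h.2.2)) (fun ω => (Y ω, X ω, Z ω))]
  ring

/-- chain rule inequality packaged as an identity:
`I(A,B ; Y | W) = I(B ; Y | W) + I(A ; Y | B,W)`. -/
lemma CMI_chain [Fintype δ] (A : Ω → α) (B : Ω → β) (Y : Ω → γ) (W : Ω → δ) :
    CMI p (fun ω => (A ω, B ω)) Y W
      = CMI p B Y W + CMI p A Y (fun ω => (B ω, W ω)) := by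
  unfold CMI
  rw [show (H p fun ω => ((A ω, B ω), W ω)) = H p fun ω => (A ω, B ω, W ω) from
    H_map (fun q : α × β × δ => ((q.1, q.2.1), q.2.2)) (fun x y h => by
      simp [Prod.ext_iff] at h; exact Prod.ext h.1.1 (Prod.ext h.1.2 h.2)) (fun ω => (A ω, B ω, W ω))]
  rw [show (H p fun ω => ((A ω, B ω), Y ω, W ω)) = H p fun ω => (A ω, B ω, Y ω, W ω) from
    H_map (fun q : α × β × γ × δ => ((q.1, q.2.1), q.2.2.1, q.2.2.2)) (fun x y h => by
      simp [Prod.ext_iff] at h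
      exact Prod.ext h.1.1 (Prod.ext h.1.2 (Prod.ext h.2.1 h.2.2))) (fun ω => (A ω, B ω, Y ω, W ω))]
  rw [show (H p fun ω => (Y ω, (B ω, W ω))) = H p fun ω => (B ω, Y ω, W ω) from
    H_map (fun q : β × γ × δ => (q.2.1, (q.1, q.2.2))) (fun x y h => by
      simp [Prod.ext_iff] at h; exact Prod.ext h.2.1 (Prod.ext h.1 h.2.2)) (fun ω => (B ω, Y ω, W ω))]
  rw [show (H p fun ω => (A ω, Y ω, (B ω, W ω))) = H p fun ω => (A ω, B ω, Y ω, W ω) from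
    H_map (fun q : α × β × γ × δ => (q.1, q.2.2.1, (q.2.1, q.2.2.2))) (fun x y h => by
      simp [Prod.ext_iff] at h
      exact Prod.ext h.1 (Prod.ext h.2.2.1 (Prod.ext h.2.1 h.2.2.2))) (fun ω => (A ω, B ω, Y ω, W ω))]
  ring

variable {α' γ' : Type*} [Fintype α'] [Fintype γ']

/-- From `(W,S) → T → Y` Markov: `I(S;Y|W,T) = 0`. -/
lemma CMI_markov_zero' (hp : IsPMF p) {W : Ω → δ} {S : Ω → α} {T : Ω → α'} {Y : Ω → β}
    (h : MarkovTriple p (fun ω => (W ω, S ω)) T Y) :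
    CMI p S Y (fun ω => (W ω, T ω)) = 0 := by
  have h0 : CMI p (fun ω => (W ω, S ω)) Y T = 0 := CMI_markov_zero hp h
  have hsw : CMI p (fun ω => (S ω, W ω)) Y T = CMI p (fun ω => (W ω, S ω)) Y T :=
    CMI_relabel_fst Prod.swap Prod.swap_injective (fun ω => (W ω, S ω)) Y T
  have hchain := CMI_chain (p := p) S W Y T
  have h1 := CMI_nonneg hp W Y T
  have h2 := CMI_nonneg hp S Y (fun ω => (W ω, T ω))
  linarith [hchain, hsw, h0, h1, h2]

/-- Data processing (first argument): `(W,S) → T → Y` Markov gives `I(S;Y|W) ≤ I(T;Y|W)`. -/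
lemma CMI_DPI_fst (hp : IsPMF p) {W : Ω → δ} {S : Ω → α} {T : Ω → α'} {Y : Ω → β}
    (h : MarkovTriple p (fun ω => (W ω, S ω)) T Y) :
    CMI p S Y W ≤ CMI p T Y W := by
  have hz : CMI p S Y (fun ω => (W ω, T ω)) = 0 := CMI_markov_zero' hp h
  have hzz : CMI p S Y (fun ω => (T ω, W ω)) = 0 := by
    have := CMI_relabel_thd (p := p) Prod.swap Prod.swap_injective S Y (fun ω => (T ω, W ω))
    rw [show (fun ω => Prod.swap (T ω, W ω)) = (fun ω => (W ω, T ω)) from rfl] at this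
    rw [← this, hz]
  have h1 := CMI_chain (p := p) S T Y W
  have h2 := CMI_chain (p := p) T S Y W
  have hJ : CMI p (fun ω => (T ω, S ω)) Y W = CMI p (fun ω => (S ω, T ω)) Y W :=
    CMI_relabel_fst Prod.swap Prod.swap_injective (fun ω => (S ω, T ω)) Y W
  have h3 := CMI_nonneg hp T Y (fun ω => (S ω, W ω))
  linarith [h1, h2, hJ, h3, hzz]

/-- Data processing (second argument): `(W,S) → T → Y` Markov gives `I(S;Y|W) ≤ I(S;T|W)`. -/
lemma CMI_DPI_snd (hp : IsPMF p) {W : Ω → δ} {S : Ω → α} {T : Ω → α'} {Y : Ω → β}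
    (h : MarkovTriple p (fun ω => (W ω, S ω)) T Y) :
    CMI p S Y W ≤ CMI p S T W := by
  have hz : CMI p S Y (fun ω => (W ω, T ω)) = 0 := CMI_markov_zero' hp h
  have hz2 : CMI p Y S (fun ω => (T ω, W ω)) = 0 := by
    have hc := CMI_comm (p := p) Y S (fun ω => (T ω, W ω))
    have := CMI_relabel_thd (p := p) Prod.swap Prod.swap_injective S Y (fun ω => (T ω, W ω))
    rw [show (fun ω => Prod.swap (T ω, W ω)) = (fun ω => (W ω, T ω)) from rfl] at this
    rw [hc, ← this, hz]
  have h1 := CMI_chain (p := p) T Y S W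
  have h2 := CMI_chain (p := p) Y T S W
  have hJ : CMI p (fun ω => (Y ω, T ω)) S W = CMI p (fun ω => (T ω, Y ω)) S W :=
    CMI_relabel_fst Prod.swap Prod.swap_injective (fun ω => (T ω, Y ω)) S W
  have h3 := CMI_nonneg hp T S (fun ω => (Y ω, W ω))
  have hc1 := CMI_comm (p := p) Y S W
  have hc2 := CMI_comm (p := p) T S W
  linarith [h1, h2, hJ, h3, hz2, hc1, hc2]

end CMILemmas

section Markov

variable {p : Ω → ℝ} {α β γ α' γ' : Type*}

lemma prb_comp_fst (V : Ω → α) (W : Ω → β) (f : α → γ) (c : γ) (b : β) :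
    prb p (fun ω => (f (V ω), W ω)) (c, b)
      = ∑ x ∈ Finset.univ.image V,
          if f x = c then prb p (fun ω => (V ω, W ω)) (x, b) else 0 := by
  have step1 : ∀ x, (if f x = c then prb p (fun ω => (V ω, W ω)) (x, b) else 0)
      = ∑ ω, if V ω = x ∧ f x = c ∧ W ω = b then p ω else 0 := by
    intro x
    by_cases hfx : f x = c
    · rw [if_pos hfx]
      unfold prb
      refine Finset.sum_congr rfl fun ω _ => ?_
      congr 1
      simp [Prod.ext_iff, hfx]
    · rw [if_neg hfx]
      refine Eq.symm (Finset.sum_eq_zero fun ω _ => ?_)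
      rw [if_neg (by tauto)]
  rw [Finset.sum_congr rfl fun x _ => step1 x, Finset.sum_comm]
  unfold prb
  refine Finset.sum_congr rfl fun ω _ => ?_
  rw [Finset.sum_eq_single_of_mem (V ω) (Finset.mem_image_of_mem V (Finset.mem_univ ω))]
  · congr 1
    simp [Prod.ext_iff]
  · intro x _ hx
    rw [if_neg (by rintro ⟨h1, -⟩; exact hx h1.symm)]

lemma MarkovTriple.map {X : Ω → α} {Y : Ω → β} {Z : Ω → γ}
    (h : MarkovTriple p X Y Z) (f : α → α') (g : γ → γ') :
    MarkovTriple p (fun ω => f (X ω)) Y (fun ω => g (Z ω)) := by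
  intro a b c
  have e1 : prb p (fun ω => (f (X ω), Y ω, g (Z ω))) (a, b, c)
      = ∑ x ∈ Finset.univ.image X, if f x = a then
          (∑ z ∈ Finset.univ.image Z, if g z = c then
            prb p (fun ω => (X ω, Y ω, Z ω)) (x, b, z) else 0) else 0 := by
    rw [prb_comp_fst X (fun ω => (Y ω, g (Z ω))) f a (b, c)]
    refine Finset.sum_congr rfl fun x _ => ?_
    by_cases hfx : f x = a
    · rw [if_pos hfx, if_pos hfx]
      have hsw : prb p (fun ω => (X ω, Y ω, g (Z ω))) (x, b, c)
          = prb p (fun ω => (g (Z ω), X ω, Y ω)) (c, x, b) :=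
        prb_congr (fun ω => by constructor <;> (intro h2; simp_all [Prod.ext_iff] <;> tauto))
      rw [hsw, prb_comp_fst Z (fun ω => (X ω, Y ω)) g c (x, b)]
      refine Finset.sum_congr rfl fun z _ => ?_
      by_cases hgz : g z = c
      · rw [if_pos hgz, if_pos hgz]
        exact prb_congr (fun ω => by constructor <;> (intro h2; simp_all [Prod.ext_iff] <;> tauto))
      · rw [if_neg hgz, if_neg hgz]
    · rw [if_neg hfx, if_neg hfx]
  have e2 : prb p (fun ω => (f (X ω), Y ω)) (a, b)
      = ∑ x ∈ Finset.univ.image X, if f x = a then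
          prb p (fun ω => (X ω, Y ω)) (x, b) else 0 :=
    prb_comp_fst X Y f a b
  have e3 : prb p (fun ω => (Y ω, g (Z ω))) (b, c)
      = ∑ z ∈ Finset.univ.image Z, if g z = c then
          prb p (fun ω => (Y ω, Z ω)) (b, z) else 0 := by
    have hsw : prb p (fun ω => (Y ω, g (Z ω))) (b, c)
        = prb p (fun ω => (g (Z ω), Y ω)) (c, b) :=
      prb_congr (fun ω => by constructor <;> (intro h2; simp_all [Prod.ext_iff] <;> tauto))
    rw [hsw, prb_comp_fst Z Y g c b]
    refine Finset.sum_congr rfl fun z _ => ?_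
    by_cases hgz : g z = c
    · rw [if_pos hgz, if_pos hgz]
      exact prb_congr (fun ω => by constructor <;> (intro h2; simp_all [Prod.ext_iff] <;> tauto))
    · rw [if_neg hgz, if_neg hgz]
  rw [e1, e2, e3, Finset.sum_mul_sum, Finset.sum_mul]
  refine Finset.sum_congr rfl fun x _ => ?_
  by_cases hfx : f x = a
  · simp only [if_pos hfx, Finset.sum_mul]
    refine Finset.sum_congr rfl fun z _ => ?_
    by_cases hgz : g z = c
    · simp only [if_pos hgz]
      exact h x b z
    · simp only [if_neg hgz, zero_mul, mul_zero]
  · simp only [if_neg hfx, zero_mul]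
    exact (Finset.sum_eq_zero fun z _ => by simp only [zero_mul]).symm

end Markov


section Params

variable {K : ℕ} {𝒰 : Fin (K - 1) → Type*} [∀ i, Fintype (𝒰 i)]
  {𝒳 : Type*} [Fintype 𝒳] {𝒴 : Fin K → Type*} [∀ k, Fintype (𝒴 k)]

/-- `a_1 = I(U_1;Y_1)` and `a_j = I(U_j;Y_j|U_{j-1})` for `2 ≤ j ≤ K`, with `U_K := X`;
indices are `1`-based (value `0` outside `1 ≤ j ≤ K`). -/
def aT (p : Ω → ℝ) (U : (i : Fin (K - 1)) → Ω → 𝒰 i) (X : Ω → 𝒳)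
    (Y : (k : Fin K) → Ω → 𝒴 k) (j : ℕ) : ℝ :=
  if h : 2 ≤ K ∧ 1 ≤ j ∧ j ≤ K then
    if h1 : j = 1 then MI p (U ⟨0, by omega⟩) (Y ⟨0, by omega⟩)
    else if hK : j = K then
      CMI p X (Y ⟨j - 1, by omega⟩) (U ⟨j - 2, by omega⟩)
    else CMI p (U ⟨j - 1, by omega⟩) (Y ⟨j - 1, by omega⟩) (U ⟨j - 2, by omega⟩)
  else 0

/-- `b_{j,l} = I(U_j; Y_{l-2} | U_{l-2})` for `3 ≤ l ≤ K + 1`, `l - 1 ≤ j ≤ K`, with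
`U_K := X`; indices are `1`-based (value `0` outside this range). -/
def bT (p : Ω → ℝ) (U : (i : Fin (K - 1)) → Ω → 𝒰 i) (X : Ω → 𝒳)
    (Y : (k : Fin K) → Ω → 𝒴 k) (j l : ℕ) : ℝ :=
  if h : 3 ≤ l ∧ l ≤ K + 1 ∧ l - 1 ≤ j ∧ j ≤ K then
    if hK : j = K then CMI p X (Y ⟨l - 3, by omega⟩) (U ⟨l - 3, by omega⟩)
    else CMI p (U ⟨j - 1, by omega⟩) (Y ⟨l - 3, by omega⟩) (U ⟨l - 3, by omega⟩)
  else 0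

end Params

/-- `1`-based access to a `Fin K`-indexed rate tuple. -/
def oneB {K : ℕ} (R : Fin K → ℝ) (j : ℕ) : ℝ :=
  if h : 1 ≤ j ∧ j ≤ K then R ⟨j - 1, by omega⟩ else 0



section Arith

lemma sum_Icc_succ (f : ℕ → ℝ) {l t : ℕ} (h : l ≤ t + 1) :
    ∑ i ∈ Finset.Icc l (t + 1), f i = (∑ i ∈ Finset.Icc l t, f i) + f (t + 1) := by
  have he : Finset.Icc l (t + 1) = insert (t + 1) (Finset.Icc l t) := by
    ext x
    simp only [Finset.mem_Icc, Finset.mem_insert]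
    omega
  rw [he, Finset.sum_insert (by simp only [Finset.mem_Icc]; omega)]
  ring

lemma sum_Icc_split (f : ℕ → ℝ) {l j t : ℕ} (h1 : l ≤ j + 1) (h2 : j ≤ t) :
    ∑ i ∈ Finset.Icc l t, f i
      = (∑ i ∈ Finset.Icc l j, f i) + ∑ i ∈ Finset.Icc (j + 1) t, f i := by
  induction t, h2 using Nat.le_induction with
  | base =>
    rw [Finset.Icc_eq_empty (by omega : ¬ j + 1 ≤ j), Finset.sum_empty, add_zero]
  | succ t ht ih =>
    rw [sum_Icc_succ f (by omega), sum_Icc_succ f (by omega), ih]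
    ring

lemma sum_Icc_tele (g : ℕ → ℝ) {l j : ℕ} (hl : 1 ≤ l) (h : l ≤ j + 1) :
    ∑ i ∈ Finset.Icc l j, (g i - g (i - 1)) = g j - g (l - 1) := by
  rcases le_or_gt l j with hle | hgt
  · induction j, hle using Nat.le_induction with
    | base =>
      rw [show Finset.Icc l l = {l} from Finset.Icc_self l, Finset.sum_singleton]
    | succ j hj ih =>
      rw [sum_Icc_succ _ (by omega), ih (by omega)]
      have : j + 1 - 1 = j := by omega
      rw [this]
      ring
  · have : j = l - 1 := by omega
    subst this
    rw [Finset.Icc_eq_empty (by omega), Finset.sum_empty]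
    ring

lemma sum_Icc_single (f : ℕ → ℝ) (l : ℕ) : ∑ i ∈ Finset.Icc l l, f i = f l := by
  rw [Finset.Icc_self, Finset.sum_singleton]


end Arith

/-- Converse of the rate-sharing projection (the other half of the
inductive Fourier–Motzkin elimination): with parameters instantiated by the mutual
informations of random variables forming the Markov chain
`U_1 → ⋯ → U_{K-1} → X → Y_K → ⋯ → Y_1` (and `U_K := X`), every nonnegative tuple in
the closed-form region arises from component rates in the component-rate region via
the rate-sharing equalities.  All indices are `1`-based via `oneB`, `aT`, `bT`. -/
theorem closed_form_region_lifts
    {K : ℕ} (hK : 3 ≤ K)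
    {Ωs : Type} [Fintype Ωs] (p : Ωs → ℝ) (hp : IsPMF p)
    {𝒰 : Fin (K - 1) → Type} [∀ i, Fintype (𝒰 i)]
    {𝒳 : Type} [Fintype 𝒳] {𝒴 : Fin K → Type} [∀ k, Fintype (𝒴 k)]
    (U : (i : Fin (K - 1)) → Ωs → 𝒰 i) (X : Ωs → 𝒳) (Y : (k : Fin K) → Ωs → 𝒴 k)
    -- the Markov chain U₁ → ⋯ → U_{K-1} → X → Y_K → ⋯ → Y₁
    (hchainU : ∀ j : Fin (K - 1),
      MarkovTriple p (fun ω => fun i : {i : Fin (K - 1) // i < j} => U i.1 ω) (U j)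
        (fun ω => ((fun i : {i : Fin (K - 1) // j < i} => U i.1 ω), X ω,
          fun k : Fin K => Y k ω)))
    (hchainX : MarkovTriple p (fun ω => fun i : Fin (K - 1) => U i ω) X
      (fun ω => fun k : Fin K => Y k ω))
    (hchainY : ∀ j : Fin K,
      MarkovTriple p
        (fun ω => ((fun i : Fin (K - 1) => U i ω), X ω,
          fun i : {i : Fin K // j < i} => Y i.1 ω))
        (Y j)
        (fun ω => fun i : {i : Fin K // i < j} => Y i.1 ω))
    (R : Fin K → ℝ) (hR : ∀ k, 0 ≤ R k)
    -- (R₁,…,R_K) lies in the closed-form region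
    (h1 : oneB R 1 ≤ aT p U X Y 1)
    (h2 : ∀ k : ℕ, 2 ≤ k → k ≤ K →
      ∑ j ∈ Finset.Icc 2 k, oneB R j ≤ ∑ j ∈ Finset.Icc 2 k, aT p U X Y j)
    (h3 : ∀ l k : ℕ, 3 ≤ l → l ≤ k → k ≤ K →
      ∑ j ∈ Finset.Icc l k, oneB R j ≤
        (∑ j ∈ Finset.Icc (l - 1) k, aT p U X Y j) - bT p U X Y k l) :
    -- there exist component rates in the component-rate region with rate sharing
    ∃ r1 r2 : ℕ → ℝ,
      (∀ k, 2 ≤ k → k ≤ K → 0 ≤ r1 k ∧ 0 ≤ r2 k) ∧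
      oneB R 1 ≤ aT p U X Y 1 ∧
      (∀ k, 2 ≤ k → k ≤ K → r1 k + r2 k ≤ aT p U X Y k) ∧
      (∀ l j, 3 ≤ l → l ≤ K → l - 1 ≤ j → j ≤ K →
        r2 (l - 1) + ∑ i ∈ Finset.Icc l j, (r1 i + r2 i)
          ≤ (∑ i ∈ Finset.Icc (l - 1) j, aT p U X Y i) - bT p U X Y j l) ∧
      -- the rate-sharing equalities
      oneB R 2 = r1 2 ∧
      (∀ k, 3 ≤ k → k ≤ K - 1 → oneB R k = r2 (k - 1) + r1 k) ∧
      oneB R K = r2 (K - 1) + r1 K + r2 K := by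
  classical
  -- abbreviations
  set aa := aT p U X Y with haa
  set bb := bT p U X Y with hbb
  set Rb := oneB R with hRbd
  -- nonnegativity of the parameters
  have hRb : ∀ j, 0 ≤ Rb j := by
    intro j
    rw [hRbd]
    unfold oneB
    split
    · exact hR _
    · exact le_refl 0
  have ha : ∀ j, 0 ≤ aa j := by
    intro j
    rw [haa]
    unfold aT
    split_ifs
    · exact MI_nonneg hp _ _
    · exact CMI_nonneg hp _ _ _
    · exact CMI_nonneg hp _ _ _
    · exact le_refl 0
  have hb0 : ∀ j l, 0 ≤ bb j l := by
    intro j l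
    rw [hbb]
    unfold bT
    split_ifs
    · exact CMI_nonneg hp _ _ _
    · exact CMI_nonneg hp _ _ _
    · exact le_refl 0
  -- data processing inequalities
  have hbmono : ∀ l j t : ℕ, 3 ≤ l → l ≤ K → l - 1 ≤ j → j ≤ t → t ≤ K →
      bb j l ≤ bb t l := by
    intro l j t hl3 hlK hlj hjt htK
    rcases eq_or_lt_of_le hjt with rfl | hjt'
    · exact le_refl _
    have hbj : bb j l = CMI p (U ⟨j - 1, by omega⟩) (Y ⟨l - 3, by omega⟩)
        (U ⟨l - 3, by omega⟩) := by
      rw [hbb]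
      unfold bT
      rw [dif_pos ⟨hl3, by omega, hlj, by omega⟩, dif_neg (by omega : ¬ j = K)]
    by_cases htK' : t = K
    · have hbt : bb t l = CMI p X (Y ⟨l - 3, by omega⟩) (U ⟨l - 3, by omega⟩) := by
        rw [hbb]
        unfold bT
        rw [dif_pos ⟨hl3, by omega, by omega, htK⟩, dif_pos htK']
      rw [hbj, hbt]
      exact CMI_DPI_fst hp (hchainX.map
        (fun v => (v ⟨l - 3, by omega⟩, v ⟨j - 1, by omega⟩))
        (fun w => w ⟨l - 3, by omega⟩))
    · have hbt : bb t l = CMI p (U ⟨t - 1, by omega⟩) (Y ⟨l - 3, by omega⟩)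
          (U ⟨l - 3, by omega⟩) := by
        rw [hbb]
        unfold bT
        rw [dif_pos ⟨hl3, by omega, by omega, htK⟩, dif_neg htK']
      rw [hbj, hbt]
      exact CMI_DPI_fst hp ((hchainU ⟨t - 1, by omega⟩).map
        (fun v => (v ⟨⟨l - 3, by omega⟩, Fin.mk_lt_mk.mpr (by omega)⟩,
          v ⟨⟨j - 1, by omega⟩, Fin.mk_lt_mk.mpr (by omega)⟩))
        (fun w => w.2.2 ⟨l - 3, by omega⟩))
  have hba : ∀ j : ℕ, 2 ≤ j → j + 1 ≤ K → bb j (j + 1) ≤ aa j := by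
    intro j hj2 hjK
    have hbj : bb j (j + 1) = CMI p (U ⟨j - 1, by omega⟩) (Y ⟨j - 2, by omega⟩)
        (U ⟨j - 2, by omega⟩) := by
      rw [hbb]
      unfold bT
      rw [dif_pos ⟨by omega, by omega, by omega, by omega⟩, dif_neg (by omega : ¬ j = K)]
      rfl
    have haj : aa j = CMI p (U ⟨j - 1, by omega⟩) (Y ⟨j - 1, by omega⟩)
        (U ⟨j - 2, by omega⟩) := by
      rw [haa]
      unfold aT
      rw [dif_pos ⟨by omega, by omega, by omega⟩, dif_neg (by omega : ¬ j = 1),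
        dif_neg (by omega : ¬ j = K)]
    rw [hbj, haj]
    exact CMI_DPI_snd hp ((hchainY ⟨j - 1, by omega⟩).map
      (fun w => (w.1 ⟨j - 2, by omega⟩, w.1 ⟨j - 1, by omega⟩))
      (fun v => v ⟨⟨j - 2, by omega⟩, Fin.mk_lt_mk.mpr (by omega)⟩))
  -- the slack construction
  set D : ℕ → ℕ → ℝ := fun l t => ∑ i ∈ Finset.Icc l t, (Rb i - aa i) with hDd
  have hDsub : ∀ l t, D l t = (∑ i ∈ Finset.Icc l t, Rb i) - ∑ i ∈ Finset.Icc l t, aa i := by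
    intro l t
    rw [hDd]
    simp only [Finset.sum_sub_distrib]
  set s : ℕ → ℝ := fun j => if h : j + 1 ≤ K then
      max 0 ((Finset.Icc (j + 1) K).sup' (Finset.nonempty_Icc.mpr h) (D (j + 1))) else 0
      with hsd
  have hs0 : ∀ j, 0 ≤ s j := by
    intro j
    rw [hsd]
    simp only
    split
    · exact le_max_left _ _
    · exact le_refl 0
  have hsK : s K = 0 := by
    rw [hsd]
    simp only
    rw [dif_neg (by omega)]
  have hsge : ∀ j t, j + 1 ≤ t → t ≤ K → D (j + 1) t ≤ s j := by
    intro j t h1t h2t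
    have hK' : j + 1 ≤ K := le_trans h1t h2t
    rw [hsd]
    simp only
    rw [dif_pos hK']
    exact le_trans (Finset.le_sup' (D (j + 1)) (Finset.mem_Icc.mpr ⟨h1t, h2t⟩))
      (le_max_right _ _)
  have hsle : ∀ j (c : ℝ), j + 1 ≤ K → 0 ≤ c →
      (∀ t, j + 1 ≤ t → t ≤ K → D (j + 1) t ≤ c) → s j ≤ c := by
    intro j c hjK hc hall
    rw [hsd]
    simp only
    rw [dif_pos hjK]
    refine max_le hc (Finset.sup'_le _ _ fun t ht => ?_)
    exact hall t (Finset.mem_Icc.mp ht).1 (Finset.mem_Icc.mp ht).2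
  -- the key bounds on the slacks
  have P2 : ∀ j, 2 ≤ j → j + 1 ≤ K → s j ≤ Rb (j + 1) := by
    intro j hj2 hjK
    refine hsle j _ hjK (hRb _) (fun t h1t h2t => ?_)
    rw [hDsub]
    rcases eq_or_lt_of_le h1t with rfl | h1t'
    · rw [sum_Icc_single, sum_Icc_single]
      have := ha (j + 1)
      linarith
    · have hsR := sum_Icc_split Rb (show j + 1 ≤ j + 1 + 1 by omega) (show j + 1 ≤ t by omega)
      rw [sum_Icc_single] at hsR
      have h3' := h3 (j + 1 + 1) t (by omega) (by omega) h2t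
      rw [show j + 1 + 1 - 1 = j + 1 from rfl] at h3'
      have hbt := hb0 t (j + 1 + 1)
      linarith
  have P3 : ∀ j, 2 ≤ j → j + 1 ≤ K → s j ≤ aa j - bb j (j + 1) := by
    intro j hj2 hjK
    refine hsle j _ hjK (by linarith [hba j hj2 hjK]) (fun t h1t h2t => ?_)
    rw [hDsub]
    have h3' := h3 (j + 1) t (by omega) h1t h2t
    rw [show j + 1 - 1 = j from rfl] at h3'
    have hbm := hbmono (j + 1) j t (by omega) (by omega) (by omega) (by omega) h2t
    have hsa := sum_Icc_split aa (show j ≤ j + 1 by omega) (show j ≤ t by omega)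
    rw [sum_Icc_single] at hsa
    linarith
  have P4 : ∀ l j, 3 ≤ l → l ≤ j → j + 1 ≤ K →
      s j ≤ (∑ i ∈ Finset.Icc (l - 1) j, aa i) - bb j l - ∑ i ∈ Finset.Icc l j, Rb i := by
    intro l j hl3 hlj hjK
    refine hsle j _ hjK (by linarith [h3 l j hl3 hlj (by omega)]) (fun t h1t h2t => ?_)
    rw [hDsub]
    have h3' := h3 l t hl3 (by omega) h2t
    have hbm := hbmono l j t hl3 (by omega) (by omega) (by omega) h2t
    have hsR := sum_Icc_split Rb (show l ≤ j + 1 by omega) (show j ≤ t by omega)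
    have hsA := sum_Icc_split aa (show l - 1 ≤ j + 1 by omega) (show j ≤ t by omega)
    linarith
  have P5 : Rb 2 + s 2 ≤ aa 2 := by
    have hs2 : s 2 ≤ aa 2 - Rb 2 := by
      refine hsle 2 _ (by omega) ?_ (fun t h1t h2t => ?_)
      · have h22 := h2 2 (le_refl 2) (by omega)
        rw [sum_Icc_single, sum_Icc_single] at h22
        linarith
      · rw [hDsub]
        have h2t' := h2 t (by omega) h2t
        have hsR := sum_Icc_split Rb (show 2 ≤ 2 + 1 by omega) (show 2 ≤ t by omega)
        have hsA := sum_Icc_split aa (show 2 ≤ 2 + 1 by omega) (show 2 ≤ t by omega)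
        rw [sum_Icc_single] at hsR hsA
        linarith
    linarith
  have P6 : ∀ j, 3 ≤ j → j + 1 ≤ K → s j ≤ s (j - 1) + aa j - Rb j := by
    intro j hj3 hjK
    have hbase : Rb j - aa j ≤ s (j - 1) := by
      have hg := hsge (j - 1) j (by omega) (by omega)
      rw [show j - 1 + 1 = j by omega, hDsub, sum_Icc_single, sum_Icc_single] at hg
      exact hg
    refine hsle j _ hjK (by linarith) (fun t h1t h2t => ?_)
    have hst := hsge (j - 1) t (by omega) h2t
    rw [show j - 1 + 1 = j by omega] at hst
    have hsplit : D j t = (Rb j - aa j) + D (j + 1) t := by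
      rw [hDd]
      simp only
      rw [sum_Icc_split _ (show j ≤ j + 1 by omega) (show j ≤ t by omega), sum_Icc_single]
    linarith
  have P7 : Rb K - aa K ≤ s (K - 1) := by
    have hg := hsge (K - 1) K (by omega) (le_refl K)
    rw [show K - 1 + 1 = K by omega, hDsub, sum_Icc_single, sum_Icc_single] at hg
    exact hg
  -- the component rates
  set r1 : ℕ → ℝ := fun k => if k = 2 then Rb 2 else Rb k - s (k - 1) with hr1
  refine ⟨r1, s, ?_, h1, ?_, ?_, ?_, ?_, ?_⟩
  · -- nonnegativity
    intro k hk2 hkK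
    refine ⟨?_, hs0 k⟩
    by_cases hk : k = 2
    · subst hk
      rw [hr1]
      norm_num
      exact hRb 2
    · rw [hr1]
      simp only [if_neg hk]
      have hp2 := P2 (k - 1) (by omega) (by omega)
      rw [show k - 1 + 1 = k by omega] at hp2
      linarith
  · -- single-letter bounds
    intro k hk2 hkK
    by_cases hk : k = 2
    · subst hk
      rw [hr1]
      norm_num
      linarith [P5]
    by_cases hkK' : k = K
    · rw [hkK', hr1]
      simp only [if_neg (show ¬ K = 2 by omega)]
      rw [hsK]
      linarith [P7]
    · rw [hr1]
      simp only [if_neg hk]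
      have := P6 k (by omega) (by omega)
      linarith
  · -- the region constraints
    intro l j hl3 hlK hlj hjK
    have htele : ∀ m, l ≤ m + 1 → m + 1 ≤ K →
        (∑ i ∈ Finset.Icc l m, (r1 i + s i))
          = (∑ i ∈ Finset.Icc l m, Rb i) + (s m - s (l - 1)) := by
      intro m hm hmK
      have hc : ∀ i ∈ Finset.Icc l m, (r1 i + s i) = Rb i + (s i - s (i - 1)) := by
        intro i hi
        rw [Finset.mem_Icc] at hi
        rw [hr1]
        simp only [if_neg (show ¬ i = 2 by omega)]
        ring
      rw [Finset.sum_congr rfl hc, Finset.sum_add_distrib,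
        sum_Icc_tele s (by omega) hm]
    by_cases hjl : j = l - 1
    · subst hjl
      rw [Finset.Icc_eq_empty (by omega : ¬ l ≤ l - 1), Finset.sum_empty, add_zero,
        sum_Icc_single]
      have hp3 := P3 (l - 1) (by omega) (by omega)
      rw [show l - 1 + 1 = l by omega] at hp3
      exact hp3
    · have hlj' : l ≤ j := by omega
      by_cases hjK' : j = K
      · rw [hjK']
        rw [sum_Icc_split (fun i => r1 i + s i) (show l ≤ K - 1 + 1 by omega)
          (show K - 1 ≤ K by omega), htele (K - 1) (by omega) (by omega),
          show K - 1 + 1 = K by omega, sum_Icc_single]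
        have hr1K : r1 K + s K = Rb K - s (K - 1) := by
          rw [hr1, hsK]
          simp only [if_neg (show ¬ K = 2 by omega)]
          ring
        rw [hr1K]
        have h3' := h3 l K hl3 (by omega) (le_refl K)
        have hsR := sum_Icc_split Rb (show l ≤ K - 1 + 1 by omega) (show K - 1 ≤ K by omega)
        rw [show K - 1 + 1 = K by omega, sum_Icc_single] at hsR
        linarith
      · rw [htele j (by omega) (by omega)]
        have h4 := P4 l j hl3 hlj' (by omega)
        linarith
  · -- rate sharing: k = 2
    rw [hr1]
    norm_num
  · -- rate sharing: middle
    intro k hk3 hkK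
    rw [hr1]
    simp only [if_neg (show ¬ k = 2 by omega)]
    ring
  · -- rate sharing: k = K
    rw [hr1, hsK]
    simp only [if_neg (show ¬ K = 2 by omega)]
    ring

end BRSec
end
end

section
/- Let a_1, a_2, a_3, b_{2,3}, b_{3,3}, b_{3,4} be real numbers with 0 ≤ b_{2,3}, b_{2,3} ≤ a_2, b_{2,3} ≤ b_{3,3}, and 0 ≤ b_{3,4}. Then for all nonnegative reals R1, R2, R3, R_{3,2}: there exist nonnegative reals R_{2,1}, R_{2,2}, R_{3,1} with R2 = R_{2,1} and R3 = R_{2,2} + R_{3,1} satisfying R1 ≤ a_1; R_{2,1} + R_{2,2} ≤ a_2; R_{3,1} + R_{3,2} ≤ a_3; R_{2,2} ≤ a_2 − b_{2,3}; R_{2,2} + R_{3,1} + R_{3,2} ≤ a_2 + a_3 − b_{3,3}; and R_{3,2} ≤ a_3 − b_{3,4}, if and only if R1 ≤ a_1; R2 ≤ a_2; R2 + R3 + R_{3,2} ≤ a_2 + a_3; R3 + R_{3,2} ≤ a_2 + a_3 − b_{3,3}; and R_{3,2} ≤ a_3 − b_{3,4}. -/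
/-- Base step (`k = 3`) of the inductive Fourier–Motzkin elimination.
Here `a1 = I(U1;Y1)`, `a2 = I(U2;Y2|U1)`, `a3 = I(U3;Y3|U2)`, `b23 = I(U2;Y1|U1)`,
`b33 = I(U3;Y1|U1)`, `b34 = I(U3;Y2|U2)`. -/
theorem fourier_motzkin_base
    (a1 a2 a3 b23 b33 b34 : ℝ)
    (hb23_nonneg : 0 ≤ b23) (hb23_le : b23 ≤ a2) (hb23_le' : b23 ≤ b33)
    (hb34_nonneg : 0 ≤ b34)
    (R1 R2 R3 R32 : ℝ)
    (hR1 : 0 ≤ R1) (hR2 : 0 ≤ R2) (hR3 : 0 ≤ R3) (hR32 : 0 ≤ R32) :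
    (∃ R21 R22 R31 : ℝ,
        0 ≤ R21 ∧ 0 ≤ R22 ∧ 0 ≤ R31 ∧
        R2 = R21 ∧ R3 = R22 + R31 ∧
        R1 ≤ a1 ∧
        R21 + R22 ≤ a2 ∧
        R31 + R32 ≤ a3 ∧
        R22 ≤ a2 - b23 ∧
        R22 + R31 + R32 ≤ a2 + a3 - b33 ∧
        R32 ≤ a3 - b34)
    ↔ (R1 ≤ a1 ∧
        R2 ≤ a2 ∧
        R2 + R3 + R32 ≤ a2 + a3 ∧
        R3 + R32 ≤ a2 + a3 - b33 ∧
        R32 ≤ a3 - b34) := by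
  constructor
  · rintro ⟨R21, R22, R31, h1, h2, h3, rfl, rfl, h6, h7, h8, h9, h10, h11⟩
    exact ⟨h6, by linarith, by linarith, by linarith, h11⟩
  · rintro ⟨h1, h2, h3, h4, h5⟩
    set R22 := min R3 (min (a2 - b23) (a2 - R2)) with hdef
    have hR22_le1 : R22 ≤ R3 := min_le_left _ _
    have hR22_le2 : R22 ≤ a2 - b23 := le_trans (min_le_right _ _) (min_le_left _ _)
    have hR22_le3 : R22 ≤ a2 - R2 := le_trans (min_le_right _ _) (min_le_right _ _)
    have hR22_ge : R3 + R32 - a3 ≤ R22 := by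
      refine le_min (by linarith) (le_min (by linarith) (by linarith))
    have hR22_nonneg : 0 ≤ R22 := by
      refine le_min (by linarith) (le_min (by linarith) (by linarith))
    exact ⟨R2, R22, R3 - R22, hR2, hR22_nonneg, by linarith, rfl, by ring,
      h1, by linarith, by linarith, hR22_le2, by linarith, h5⟩
end
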